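/- Let R be a unital ring, n ≥ 2, M a 2-torsion free unital Mₙ(R)-bimodule, and Δ : Mₙ(R) → M an additive map satisfying: AB = BA = 0 implies Δ(A)B + AΔ(B) + Δ(B)A + BΔ(A) = 0, with EΔ(E)F = FΔ(E)E = 0 where E = E₁₁, F = 1 - E₁₁. Then Δ(1) commutes with every A ∈ Mₙ(R): A·Δ(1) = Δ(1)·A. -/

import Mathlib

/-- A (not necessarily unital) bimodule structure of a ring `A` on an
additive group `M`, given by a left action `l` and a right action `r`. -/
structure RingBimod (A M : Type*) [Ring A] [AddCommGroup M] where
  l : A → M → M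
  r : M → A → M
  l_add : ∀ a m₁ m₂, l a (m₁ + m₂) = l a m₁ + l a m₂
  add_l : ∀ a₁ a₂ m, l (a₁ + a₂) m = l a₁ m + l a₂ m
  r_add : ∀ m₁ m₂ a, r (m₁ + m₂) a = r m₁ a + r m₂ a
  add_r : ∀ m a₁ a₂, r m (a₁ + a₂) = r m a₁ + r m a₂
  mul_l : ∀ a₁ a₂ m, l (a₁ * a₂) m = l a₁ (l a₂ m)
  r_mul : ∀ m a₁ a₂, r m (a₁ * a₂) = r (r m a₁) a₂
  l_r : ∀ a₁ m a₂, l a₁ (r m a₂) = r (l a₁ m) a₂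


section helpers
variable {A M : Type*} [Ring A] [AddCommGroup M] (bm : RingBimod A M)

theorem rb_l_zero (a : A) : bm.l a 0 = 0 := by
  have h := bm.l_add a 0 0; rw [add_zero] at h; exact (left_eq_add.mp h)

theorem rb_zero_l (m : M) : bm.l 0 m = 0 := by
  have h := bm.add_l 0 0 m; rw [add_zero] at h; exact (left_eq_add.mp h)

theorem rb_r_zero (m : M) : bm.r m 0 = 0 := by
  have h := bm.add_r m 0 0; rw [add_zero] at h; exact (left_eq_add.mp h)

theorem rb_zero_r (a : A) : bm.r 0 a = 0 := by
  have h := bm.r_add 0 0 a; rw [add_zero] at h; exact (left_eq_add.mp h)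

theorem rb_l_neg (a : A) (m : M) : bm.l a (-m) = -bm.l a m := by
  have h := bm.l_add a m (-m)
  rw [add_neg_cancel, rb_l_zero] at h
  exact (neg_eq_of_add_eq_zero_right h.symm).symm

theorem rb_neg_l (a : A) (m : M) : bm.l (-a) m = -bm.l a m := by
  have h := bm.add_l a (-a) m
  rw [add_neg_cancel, rb_zero_l] at h
  exact (neg_eq_of_add_eq_zero_right h.symm).symm

theorem rb_r_neg (m : M) (a : A) : bm.r (-m) a = -bm.r m a := by
  have h := bm.r_add m (-m) a
  rw [add_neg_cancel, rb_zero_r] at h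
  exact (neg_eq_of_add_eq_zero_right h.symm).symm

theorem rb_neg_r (m : M) (a : A) : bm.r m (-a) = -bm.r m a := by
  have h := bm.add_r m a (-a)
  rw [add_neg_cancel, rb_r_zero] at h
  exact (neg_eq_of_add_eq_zero_right h.symm).symm

theorem rb_l_sub (a : A) (m₁ m₂ : M) : bm.l a (m₁ - m₂) = bm.l a m₁ - bm.l a m₂ := by
  rw [sub_eq_add_neg, bm.l_add, rb_l_neg, ← sub_eq_add_neg]

theorem rb_sub_l (a₁ a₂ : A) (m : M) : bm.l (a₁ - a₂) m = bm.l a₁ m - bm.l a₂ m := by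
  rw [sub_eq_add_neg, bm.add_l, rb_neg_l, ← sub_eq_add_neg]

theorem rb_r_sub (m₁ m₂ : M) (a : A) : bm.r (m₁ - m₂) a = bm.r m₁ a - bm.r m₂ a := by
  rw [sub_eq_add_neg, bm.r_add, rb_r_neg, ← sub_eq_add_neg]

theorem rb_sub_r (m : M) (a₁ a₂ : A) : bm.r m (a₁ - a₂) = bm.r m a₁ - bm.r m a₂ := by
  rw [sub_eq_add_neg, bm.add_r, rb_neg_r, ← sub_eq_add_neg]

end helpers

theorem rb_key {A M : Type*} [Ring A] [AddCommGroup M] (bm : RingBimod A M)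
    (htf : ∀ m : M, m + m = 0 → m = 0)
    (Δ : A → M) (hadd : ∀ x y, Δ (x + y) = Δ x + Δ y)
    (hΔ : ∀ x y, x * y = 0 → y * x = 0 →
      bm.r (Δ x) y + bm.l x (Δ y) + bm.r (Δ y) x + bm.l y (Δ x) = 0)
    (e f : A) (hef : e * f = 0) (hfe : f * e = 0) (hee : e * e = e) (hff : f * f = f)
    (hle : ∀ m : M, bm.l e m + bm.l f m = m) (hre : ∀ m : M, bm.r m e + bm.r m f = m)
    (z1 : bm.l e (Δ f) = 0) (z2 : bm.r (Δ f) e = 0)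
    (z3 : bm.l f (Δ e) = 0) (z4 : bm.r (Δ e) f = 0)
    (X : A) : bm.r (Δ e) (e * X * f) = bm.l (e * X * f) (Δ f) := by
  obtain ⟨P, hP⟩ : ∃ P, P = e * X * f := ⟨_, rfl⟩
  rw [← hP]
  -- Δ basics
  have Δ0 : Δ 0 = 0 := by
    have h := hadd 0 0; rw [add_zero] at h; exact (left_eq_add.mp h)
  have Δneg : ∀ x, Δ (-x) = -Δ x := fun x => by
    have h := hadd x (-x); rw [add_neg_cancel, Δ0] at h
    exact (neg_eq_of_add_eq_zero_right h.symm).symm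
  have Δsub : ∀ x y, Δ (x - y) = Δ x - Δ y := fun x y => by
    rw [sub_eq_add_neg, hadd, Δneg, ← sub_eq_add_neg]
  -- P facts
  have heP : e * P = P := by
    rw [hP]; simp only [← mul_assoc]; rw [hee]
  have hPf : P * f = P := by
    rw [hP]; simp only [mul_assoc]; rw [hff]
  have hfP : f * P = 0 := by
    rw [hP]; simp only [← mul_assoc]; rw [hfe, zero_mul, zero_mul]
  have hPe : P * e = 0 := by
    rw [hP]; simp only [mul_assoc]; rw [hfe, mul_zero, mul_zero]
  have hPP : P * P = 0 := by
    rw [hP]; simp only [← mul_assoc]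
    rw [mul_assoc (e*X) f e, hfe, mul_zero, zero_mul, zero_mul]
  have hle_e : bm.l e (Δ e) = Δ e := by
    have h := hle (Δ e); rw [z3, add_zero] at h; exact h
  have hre_f : bm.r (Δ f) f = Δ f := by
    have h := hre (Δ f); rw [z2, zero_add] at h; exact h
  have hlPΔe : bm.l P (Δ e) = 0 := by
    rw [hP, bm.mul_l, z3, rb_l_zero]
  have hconv : bm.r (bm.l P (Δ f)) f = bm.l P (Δ f) := by
    rw [← bm.l_r, hre_f]
  -- zero-product pairs
  have hab : (e - P) * (f + P) = 0 := by
    rw [sub_mul, mul_add, mul_add, hef, heP, hPf, hPP]; abel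
  have hba : (f + P) * (e - P) = 0 := by
    rw [add_mul, mul_sub, mul_sub, hfe, hfP, hPe, hPP]; abel
  have hab' : (e + P) * (f - P) = 0 := by
    rw [add_mul, mul_sub, mul_sub, hef, heP, hPf, hPP]; abel
  have hba' : (f - P) * (e + P) = 0 := by
    rw [sub_mul, mul_add, mul_add, hfe, hfP, hPe, hPP]; abel
  have e1 := hΔ (e - P) (f + P) hab hba
  have e2 := hΔ (e + P) (f - P) hab' hba'
  simp only [Δsub, hadd, rb_l_sub, rb_sub_l, rb_r_sub, rb_sub_r,
    bm.l_add, bm.add_l, bm.r_add, bm.add_r] at e1 e2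
  have h3 := congrArg₂ (fun x y : M => x - y) e1 e2
  simp only [sub_zero] at h3
  have hodd : bm.r (Δ e) P - bm.r (Δ P) f + bm.l e (Δ P) - bm.l P (Δ f)
      - bm.r (Δ f) P + bm.r (Δ P) e - bm.l f (Δ P) + bm.l P (Δ e) = 0 := by
    apply htf
    rw [← h3]
    abel
  have h4 := congrArg (fun m => bm.l e (bm.r m f)) hodd
  simp only [rb_l_sub, rb_sub_l, rb_r_sub, rb_sub_r, bm.l_add, bm.add_l, bm.r_add, bm.add_r,
    bm.l_r, ← bm.r_mul, ← bm.mul_l, hee, hff, hef, hfe, heP, hPf, hPe, hfP, hPP,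
    hle_e, hre_f, z1, z2, z3, z4, hlPΔe, hconv,
    rb_l_zero, rb_zero_l, rb_r_zero, rb_zero_r,
    zero_add, add_zero, sub_zero, zero_sub] at h4
  have h5 : bm.r (Δ e) P - bm.l P (Δ f) = 0 := by
    rw [← h4]; abel
  exact sub_eq_zero.mp h5

theorem stmt7 (R : Type*) [Ring R] (n : ℕ) (hn : 2 ≤ n)
    (M : Type*) [AddCommGroup M] (bm : RingBimod (Matrix (Fin n) (Fin n) R) M)
    (hunit : ∀ m : M, bm.l 1 m = m ∧ bm.r m 1 = m)
    (htf : ∀ m : M, m + m = 0 → m = 0)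
    (Δ : Matrix (Fin n) (Fin n) R → M)
    (hadd : ∀ A B, Δ (A + B) = Δ A + Δ B)
    (hΔ : ∀ A B, A * B = 0 → B * A = 0 →
      bm.r (Δ A) B + bm.l A (Δ B) + bm.r (Δ B) A + bm.l B (Δ A) = 0)
    (E F : Matrix (Fin n) (Fin n) R)
    (hE : E = Matrix.single ⟨0, by omega⟩ ⟨0, by omega⟩ (1 : R))
    (hF : F = 1 - E)
    (hEF1 : bm.l E (bm.r (Δ E) F) = 0) (hEF2 : bm.l F (bm.r (Δ E) E) = 0) :
    ∀ A : Matrix (Fin n) (Fin n) R,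
      bm.l A (Δ 1) = bm.r (Δ 1) A := by
  have i0 : Fin n := ⟨0, by omega⟩
  -- matrix identities
  have hEE : E * E = E := by
    rw [hE, Matrix.single_mul_single_same, one_mul]
  have hEF0 : E * F = 0 := by rw [hF, mul_sub, mul_one, hEE, sub_self]
  have hFE0 : F * E = 0 := by rw [hF, sub_mul, one_mul, hEE, sub_self]
  have hFF : F * F = F := by
    rw [hF, sub_mul, one_mul, mul_sub, mul_one, hEE, sub_self, sub_zero]
  have hEFsum : E + F = 1 := by rw [hF]; abel
  have hle : ∀ m : M, bm.l E m + bm.l F m = m := fun m => by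
    rw [← bm.add_l, hEFsum]; exact (hunit m).1
  have hre : ∀ m : M, bm.r m E + bm.r m F = m := fun m => by
    rw [← bm.add_r, hEFsum]; exact (hunit m).2
  have hEF1' : bm.r (bm.l E (Δ E)) F = 0 := by rw [← bm.l_r]; exact hEF1
  have hEF2' : bm.r (bm.l F (Δ E)) E = 0 := by rw [← bm.l_r]; exact hEF2
  -- the basic relation
  have S := hΔ E F hEF0 hFE0
  have q_a : bm.r (bm.l E (Δ F)) E = 0 := by
    apply htf
    have h := congrArg (fun m => bm.l E (bm.r m E)) S
    simp only [bm.l_add, bm.r_add, bm.l_r, ← bm.r_mul, ← bm.mul_l,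
      hEE, hFF, hEF0, hFE0, hEF1, hEF2, hEF1', hEF2',
      rb_l_zero, rb_zero_l, rb_r_zero, rb_zero_r, zero_add, add_zero] at h
    exact h
  have q_b : bm.r (bm.l F (Δ E)) F = 0 := by
    apply htf
    have h := congrArg (fun m => bm.l F (bm.r m F)) S
    simp only [bm.l_add, bm.r_add, bm.l_r, ← bm.r_mul, ← bm.mul_l,
      hEE, hFF, hEF0, hFE0, hEF1, hEF2, hEF1', hEF2',
      rb_l_zero, rb_zero_l, rb_r_zero, rb_zero_r, zero_add, add_zero] at h
    exact h
  have q_c : bm.r (bm.l E (Δ F)) F = 0 := by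
    have h := congrArg (fun m => bm.l E (bm.r m F)) S
    simp only [bm.l_add, bm.r_add, bm.l_r, ← bm.r_mul, ← bm.mul_l,
      hEE, hFF, hEF0, hFE0, hEF1, hEF2, hEF1', hEF2',
      rb_l_zero, rb_zero_l, rb_r_zero, rb_zero_r, zero_add, add_zero] at h
    exact h
  have q_d : bm.r (bm.l F (Δ F)) E = 0 := by
    have h := congrArg (fun m => bm.l F (bm.r m E)) S
    simp only [bm.l_add, bm.r_add, bm.l_r, ← bm.r_mul, ← bm.mul_l,
      hEE, hFF, hEF0, hFE0, hEF1, hEF2, hEF1', hEF2',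
      rb_l_zero, rb_zero_l, rb_r_zero, rb_zero_r, zero_add, add_zero] at h
    exact h
  -- the four vanishing corner facts
  have z1 : bm.l E (Δ F) = 0 := by
    have hm := hre (bm.l E (Δ F)); rw [q_a, q_c, add_zero] at hm; exact hm.symm
  have z2 : bm.r (Δ F) E = 0 := by
    have hm := hle (bm.r (Δ F) E); rw [bm.l_r, bm.l_r, q_a, q_d, add_zero] at hm
    exact hm.symm
  have z3 : bm.l F (Δ E) = 0 := by
    have hm := hre (bm.l F (Δ E)); rw [hEF2', q_b, add_zero] at hm; exact hm.symm
  have z4 : bm.r (Δ E) F = 0 := by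
    have hm := hle (bm.r (Δ E) F); rw [hEF1, bm.l_r, q_b, add_zero] at hm; exact hm.symm
  -- key lemma, both ways
  have kP := rb_key bm htf Δ hadd hΔ E F hEF0 hFE0 hEE hFF hle hre z1 z2 z3 z4
  have hle' : ∀ m : M, bm.l F m + bm.l E m = m := fun m => by rw [add_comm]; exact hle m
  have hre' : ∀ m : M, bm.r m F + bm.r m E = m := fun m => by rw [add_comm]; exact hre m
  have kQ := rb_key bm htf Δ hadd hΔ F E hFE0 hEF0 hFF hEE hle' hre' z3 z4 z1 z2
  -- Δ 1
  have hD : Δ 1 = Δ E + Δ F := by rw [← hEFsum]; exact hadd E F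
  -- commutation for corner elements
  have commP : ∀ X, bm.l (E * X * F) (Δ 1) = bm.r (Δ 1) (E * X * F) := by
    intro X
    have h1 : bm.l (E * X * F) (Δ E) = 0 := by rw [bm.mul_l, z3, rb_l_zero]
    have h2 : bm.r (Δ F) (E * X * F) = 0 := by
      rw [bm.r_mul, bm.r_mul, z2, rb_zero_r, rb_zero_r]
    rw [hD, bm.l_add, bm.r_add, h1, h2, zero_add, add_zero]
    exact (kP X).symm
  have commQ : ∀ X, bm.l (F * X * E) (Δ 1) = bm.r (Δ 1) (F * X * E) := by
    intro X
    have h1 : bm.l (F * X * E) (Δ F) = 0 := by rw [bm.mul_l, z1, rb_l_zero]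
    have h2 : bm.r (Δ E) (F * X * E) = 0 := by
      rw [bm.r_mul, bm.r_mul, z4, rb_zero_r, rb_zero_r]
    rw [hD, bm.l_add, bm.r_add, h1, h2, add_zero, zero_add]
    exact (kQ X).symm
  -- closure properties
  have commMul : ∀ A B : Matrix (Fin n) (Fin n) R,
      bm.l A (Δ 1) = bm.r (Δ 1) A → bm.l B (Δ 1) = bm.r (Δ 1) B →
      bm.l (A * B) (Δ 1) = bm.r (Δ 1) (A * B) := by
    intro A B hA hB
    rw [bm.mul_l, hB, bm.l_r, hA, ← bm.r_mul]
  have commAdd : ∀ A B : Matrix (Fin n) (Fin n) R,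
      bm.l A (Δ 1) = bm.r (Δ 1) A → bm.l B (Δ 1) = bm.r (Δ 1) B →
      bm.l (A + B) (Δ 1) = bm.r (Δ 1) (A + B) := by
    intro A B hA hB
    rw [bm.add_l, hA, hB, ← bm.add_r]
  have commZero : bm.l 0 (Δ 1) = bm.r (Δ 1) 0 := by
    rw [rb_zero_l, rb_r_zero]
  -- commutation for standard basis matrices
  have commStd : ∀ (i j : Fin n) (c : R),
      bm.l (Matrix.single i j c) (Δ 1) = bm.r (Δ 1) (Matrix.single i j c) := by
    intro i j c
    by_cases hi : i = (⟨0, by omega⟩ : Fin n) <;>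
      by_cases hj : j = (⟨0, by omega⟩ : Fin n)
    · -- corner (1,1): product of two off-diagonal elements
      subst hi hj
      have hfac : Matrix.single (⟨0, by omega⟩ : Fin n) (⟨0, by omega⟩ : Fin n) c
          = Matrix.single (⟨0, by omega⟩ : Fin n) (⟨1, by omega⟩ : Fin n) c
            * Matrix.single (⟨1, by omega⟩ : Fin n) (⟨0, by omega⟩ : Fin n) (1 : R) := by
        rw [Matrix.single_mul_single_same, mul_one]
      rw [hfac]
      apply commMul
      · have h10 : (⟨1, by omega⟩ : Fin n) ≠ (⟨0, by omega⟩ : Fin n) :=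
          by simp [Fin.ext_iff]
        have hid : Matrix.single (⟨0, by omega⟩ : Fin n) (⟨1, by omega⟩ : Fin n) c
            = E * Matrix.single (⟨0, by omega⟩ : Fin n) (⟨1, by omega⟩ : Fin n) c * F := by
          rw [hF, hE, Matrix.single_mul_single_same, one_mul, mul_sub, mul_one,
            Matrix.single_mul_single_of_ne (h := h10), sub_zero]
        rw [hid]; exact commP _
      · have h10 : (⟨0, by omega⟩ : Fin n) ≠ (⟨1, by omega⟩ : Fin n) :=
          by simp [Fin.ext_iff]
        have hid : Matrix.single (⟨1, by omega⟩ : Fin n) (⟨0, by omega⟩ : Fin n) (1 : R)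
            = F * Matrix.single (⟨1, by omega⟩ : Fin n) (⟨0, by omega⟩ : Fin n) (1 : R) * E := by
          rw [hF, hE, sub_mul, one_mul, Matrix.single_mul_single_of_ne (h := h10), sub_zero,
            Matrix.single_mul_single_same, mul_one]
        rw [hid]; exact commQ _
    · -- first row
      subst hi
      have hid : Matrix.single (⟨0, by omega⟩ : Fin n) j c
          = E * Matrix.single (⟨0, by omega⟩ : Fin n) j c * F := by
        rw [hF, hE, Matrix.single_mul_single_same, one_mul, mul_sub, mul_one,
          Matrix.single_mul_single_of_ne (h := hj), sub_zero]
      rw [hid]; exact commP _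
    · -- first column
      subst hj
      have hid : Matrix.single i (⟨0, by omega⟩ : Fin n) c
          = F * Matrix.single i (⟨0, by omega⟩ : Fin n) c * E := by
        rw [hF, hE, sub_mul, one_mul,
          Matrix.single_mul_single_of_ne (h := Ne.symm hi), sub_zero,
          Matrix.single_mul_single_same, mul_one]
      rw [hid]; exact commQ _
    · -- remaining block
      have hfac : Matrix.single i j c
          = Matrix.single i (⟨0, by omega⟩ : Fin n) (1 : R)
            * Matrix.single (⟨0, by omega⟩ : Fin n) j c := by
        rw [Matrix.single_mul_single_same, one_mul]
      rw [hfac]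
      apply commMul
      · have hid : Matrix.single i (⟨0, by omega⟩ : Fin n) (1 : R)
            = F * Matrix.single i (⟨0, by omega⟩ : Fin n) (1 : R) * E := by
          rw [hF, hE, sub_mul, one_mul,
            Matrix.single_mul_single_of_ne (h := Ne.symm hi), sub_zero,
            Matrix.single_mul_single_same, mul_one]
        rw [hid]; exact commQ _
      · have hid : Matrix.single (⟨0, by omega⟩ : Fin n) j c
            = E * Matrix.single (⟨0, by omega⟩ : Fin n) j c * F := by
          rw [hF, hE, Matrix.single_mul_single_same, one_mul, mul_sub, mul_one,
            Matrix.single_mul_single_of_ne (h := hj), sub_zero]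
        rw [hid]; exact commP _
  -- conclude by decomposing A
  intro A
  rw [Matrix.matrix_eq_sum_single A]
  exact Finset.sum_induction _ (fun B => bm.l B (Δ 1) = bm.r (Δ 1) B)
    commAdd commZero
    (fun i _ => Finset.sum_induction _ (fun B => bm.l B (Δ 1) = bm.r (Δ 1) B)
      commAdd commZero (fun j _ => commStd i j (A i j)))
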